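/- For every d ≥ 1 and every finite collection of pairwise distinct points x₁,…,xₙ ∈ ℝ^d, the Gram matrix (K_d(x_i,x_j))_{1≤i,j≤n} of the neural tangent kernel K_d is positive definite, i.e., its smallest eigenvalue is strictly positive. -/

import Mathlib

open Real
open scoped RealInnerProductSpace

/-- The angle `ψ(x,x') = arccos((⟨x,x'⟩ + 1)/√((‖x‖² + 1)(‖x'‖² + 1)))`. -/
noncomputable def ntkPsi (d : ℕ) (x x' : EuclideanSpace ℝ (Fin d)) : ℝ :=
  Real.arccos ((⟪x, x'⟫ + 1) / Real.sqrt ((‖x‖ ^ 2 + 1) * (‖x'‖ ^ 2 + 1)))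

/-- The neural tangent kernel `K_d` of the two-layer ReLU network on `ℝ^d`. -/
noncomputable def ntkK (d : ℕ) (x x' : EuclideanSpace ℝ (Fin d)) : ℝ :=
  (2 / π) * (π - ntkPsi d x x') * (⟪x, x'⟫ + 1)
    + (1 / π) * Real.sqrt (‖x - x'‖ ^ 2 + ‖x‖ ^ 2 * ‖x'‖ ^ 2 - ⟪x, x'⟫ ^ 2) + 1

namespace NTKaux
open Finset MeasureTheory intervalIntegral Filter Topology Matrix

noncomputable def cb (k : ℕ) : ℝ := (Nat.centralBinom k : ℝ) / 4 ^ k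

lemma cb_pos (k : ℕ) : 0 < cb k :=
  div_pos (by exact_mod_cast Nat.centralBinom_pos k) (by positivity)

lemma cb_succ (k : ℕ) : ((k:ℝ)+1) * cb (k+1) = ((2*k+1) / 2) * cb k := by
  have h : ((k:ℝ)+1) * (Nat.centralBinom (k+1) : ℝ)
      = 2*(2*(k:ℝ)+1) * (Nat.centralBinom k : ℝ) := by
    exact_mod_cast Nat.succ_mul_centralBinom_succ k
  have h4 : (4:ℝ)^(k+1) = 4 * 4^k := by ring
  unfold cb
  rw [h4]
  field_simp
  linear_combination 2 * h

lemma cb_le_one (k : ℕ) : cb k ≤ 1 := by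
  induction k with
  | zero => simp [cb, Nat.centralBinom]
  | succ k ih =>
    have h := cb_succ k
    have hk : (0:ℝ) < k + 1 := by positivity
    have hc : cb (k+1) = ((2*k+1)/2) * cb k / (k+1) := by
      field_simp at h ⊢; linarith
    rw [hc]
    rw [div_le_one hk]
    have := cb_pos k
    nlinarith

lemma cb_conv (n : ℕ) : ∑ k ∈ range (n+1), cb k * cb (n - k) = 1 := by
  induction n with
  | zero => simp [cb, Nat.centralBinom]
  | succ n ih =>
    set S : ℕ → ℝ := fun m => ∑ k ∈ range (m+1), cb k * cb (m - k) with hS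
    set T : ℕ → ℝ := fun m => ∑ k ∈ range (m+1), (k:ℝ) * cb k * cb (m - k) with hT
    have hsym : ∀ m, 2 * T m = m * S m := by
      intro m
      have h1 : T m = ∑ k ∈ range (m+1), ((m:ℝ) - k) * cb (m - k) * cb k := by
        rw [hT]
        show ∑ k ∈ range (m+1), (k:ℝ) * cb k * cb (m - k) = _
        rw [← Finset.sum_range_reflect (fun k => (k:ℝ) * cb k * cb (m - k)) (m+1)]
        apply Finset.sum_congr rfl
        intro k hk
        simp only [Finset.mem_range] at hk
        have hk' : k ≤ m := Nat.lt_succ_iff.mp hk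
        have e1 : m + 1 - 1 - k = m - k := by omega
        have e2 : m - (m - k) = k := by omega
        rw [e1, e2]
        have e3 : ((m - k : ℕ) : ℝ) = (m : ℝ) - k := by
          push_cast [Nat.cast_sub hk']; ring
        rw [e3]
      have h2 : T m + T m = ∑ k ∈ range (m+1), (m:ℝ) * (cb k * cb (m - k)) := by
        nth_rewrite 1 [h1]
        rw [hT]
        show (∑ k ∈ range (m+1), ((m:ℝ) - k) * cb (m - k) * cb k)
            + ∑ k ∈ range (m+1), (k:ℝ) * cb k * cb (m - k) = _
        rw [← Finset.sum_add_distrib]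
        apply Finset.sum_congr rfl
        intro k hk; ring
      rw [← Finset.mul_sum] at h2
      have : S m = ∑ k ∈ range (m+1), cb k * cb (m - k) := rfl
      rw [← this] at h2
      linarith
    have hTrec : T (n+1) = T n + S n / 2 := by
      have h0 : T (n+1) = ∑ j ∈ range (n+1), ((j:ℝ)+1) * cb (j+1) * cb (n - j) := by
        have := Finset.sum_range_succ' (fun k => (k:ℝ) * cb k * cb (n + 1 - k)) (n+1)
        rw [hT]
        show ∑ k ∈ range (n+1+1), (k:ℝ) * cb k * cb (n+1 - k) = _
        rw [this]
        simp only [Nat.cast_zero, zero_mul, mul_zero, add_zero, zero_mul, Nat.cast_add,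
          Nat.cast_one]
        apply Finset.sum_congr rfl
        intro j hj
        have e : n + 1 - (j + 1) = n - j := by omega
        rw [e]
      rw [h0]
      have h2 : ∀ j : ℕ, ((j:ℝ)+1) * cb (j+1) * cb (n - j)
          = ((j:ℝ) + 1/2) * cb j * cb (n - j) := by
        intro j
        have hcs := cb_succ j
        calc ((j:ℝ)+1) * cb (j+1) * cb (n - j) = (((j:ℝ)+1) * cb (j+1)) * cb (n-j) := by ring
        _ = (((2*(j:ℝ)+1)/2) * cb j) * cb (n-j) := by rw [hcs]
        _ = ((j:ℝ) + 1/2) * cb j * cb (n - j) := by ring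
      simp_rw [h2]
      rw [hT, hS]
      show ∑ j ∈ range (n+1), ((j:ℝ) + 1/2) * cb j * cb (n - j)
          = (∑ k ∈ range (n+1), (k:ℝ) * cb k * cb (n - k))
            + (∑ k ∈ range (n+1), cb k * cb (n - k)) / 2
      rw [Finset.sum_div, ← Finset.sum_add_distrib]
      apply Finset.sum_congr rfl
      intro k hk; ring
    have h1 := hsym (n+1)
    have h2 := hsym n
    have hgoal : ((n:ℝ)+1) * S (n+1) = ((n:ℝ)+1) * S n := by
      push_cast at h1
      have : 2 * T (n+1) = 2 * T n + S n := by rw [hTrec]; ring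
      linarith
    have hn1 : ((n:ℝ)+1) ≠ 0 := by positivity
    have : S (n+1) = S n := mul_left_cancel₀ hn1 hgoal
    rw [hS] at this
    simpa [ih] using this


lemma sq_pow (s : ℝ) (k : ℕ) : s ^ (2*k) = (s^2)^k := by rw [pow_mul]

lemma cbpow_nonneg (s : ℝ) (k : ℕ) : 0 ≤ cb k * s ^ (2*k) := by
  rw [sq_pow]
  have := cb_pos k
  positivity

lemma sqlt (s : ℝ) (hs : |s| < 1) : s^2 < 1 := by nlinarith [abs_nonneg s, sq_abs s]

lemma summable_cbpow (s : ℝ) (hs : |s| < 1) : Summable (fun k => cb k * s ^ (2*k)) := by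
  apply Summable.of_norm_bounded
    (summable_geometric_of_lt_one (sq_nonneg s) (sqlt s hs))
  intro k
  rw [Real.norm_eq_abs, abs_of_nonneg (cbpow_nonneg s k), sq_pow]
  have h0 : (0:ℝ) ≤ (s^2)^k := pow_nonneg (sq_nonneg s) k
  nlinarith [cb_pos k, cb_le_one k]

lemma hasSum_B (s : ℝ) (hs : |s| < 1) :
    HasSum (fun k => cb k * s ^ (2*k)) ((Real.sqrt (1 - s^2))⁻¹) := by
  have hsum := summable_cbpow s hs
  have hnorm : Summable (fun k => ‖cb k * s ^ (2*k)‖) := by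
    simpa only [Real.norm_eq_abs, abs_of_nonneg (cbpow_nonneg s _)] using hsum
  set P := ∑' k, cb k * s ^ (2*k) with hP
  have hsq : P * P = (1 - s^2)⁻¹ := by
    rw [hP, tsum_mul_tsum_eq_tsum_sum_range_of_summable_norm hnorm hnorm]
    have h1 : ∀ n : ℕ, (∑ k ∈ range (n+1), (cb k * s^(2*k)) * (cb (n-k) * s^(2*(n-k))))
        = (s^2)^n := by
      intro n
      have heq : ∀ k ∈ range (n+1), (cb k * s^(2*k)) * (cb (n-k) * s^(2*(n-k)))
          = cb k * cb (n-k) * s^(2*n) := by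
        intro k hk
        simp only [mem_range] at hk
        have hps : s^(2*k) * s^(2*(n-k)) = s^(2*n) := by
          rw [← pow_add]; congr 1; omega
        calc (cb k * s^(2*k)) * (cb (n-k) * s^(2*(n-k)))
            = cb k * cb (n-k) * (s^(2*k) * s^(2*(n-k))) := by ring
          _ = cb k * cb (n-k) * s^(2*n) := by rw [hps]
      rw [Finset.sum_congr rfl heq, ← Finset.sum_mul, cb_conv, one_mul, sq_pow]
    have h2 : (fun n => ∑ k ∈ range (n+1), (cb k * s^(2*k)) * (cb (n-k) * s^(2*(n-k))))
        = fun n => (s^2)^n := funext h1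
    rw [h2, tsum_geometric_of_lt_one (sq_nonneg s) (sqlt s hs)]
  have hP1 : 1 ≤ P := by
    have h0 : cb 0 * s ^ (2*0) = 1 := by simp [cb, Nat.centralBinom]
    calc (1:ℝ) = cb 0 * s ^ (2*0) := h0.symm
      _ ≤ P := Summable.le_tsum hsum 0 (fun j _ => cbpow_nonneg s j)
  have hPpos : (0:ℝ) < P := lt_of_lt_of_le one_pos hP1
  have hgoal : P = (Real.sqrt (1 - s^2))⁻¹ := by
    have h2 : Real.sqrt (P * P) = Real.sqrt ((1-s^2)⁻¹) := by rw [hsq]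
    rw [Real.sqrt_mul_self hPpos.le] at h2
    rw [h2, Real.sqrt_inv]
  rw [← hgoal]
  exact hsum.hasSum

/-- common interchange machinery: for `0 ≤ t < 1` and a continuous family
`F k s = cb k * mono k * s ^ e k` ... we do the two cases explicitly below. -/

lemma hasSum_arcsin (t : ℝ) (ht0 : 0 ≤ t) (ht1 : t < 1) :
    HasSum (fun k => cb k / (2*(k:ℝ)+1) * t ^ (2*k+1)) (Real.arcsin t) := by
  have habs : ∀ s ∈ Set.Icc (0:ℝ) t, |s| < 1 := fun s hs => by
    rw [abs_of_nonneg hs.1]; exact lt_of_le_of_lt hs.2 ht1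
  have hderiv : ∀ s ∈ Set.uIcc (0:ℝ) t, HasDerivAt Real.arcsin ((Real.sqrt (1 - s^2))⁻¹) s := by
    intro s hs
    rw [Set.uIcc_of_le ht0] at hs
    have h := habs s hs
    have h1 : s ≠ -1 := fun h' => by rw [h'] at h; norm_num at h
    have h2 : s ≠ 1 := fun h' => by rw [h'] at h; norm_num at h
    simpa [one_div] using Real.hasDerivAt_arcsin h1 h2
  have hcont : ContinuousOn (fun s => (Real.sqrt (1 - s^2))⁻¹) (Set.uIcc (0:ℝ) t) := by
    apply ContinuousOn.inv₀
    · exact (Real.continuous_sqrt.comp (by continuity)).continuousOn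
    · intro s hs
      rw [Set.uIcc_of_le ht0] at hs
      have h := habs s hs
      have h1s : (0:ℝ) < 1 - s^2 := by nlinarith [sq_abs s, abs_nonneg s]
      exact (Real.sqrt_pos.mpr h1s).ne'
  have hint : ∫ s in (0:ℝ)..t, (Real.sqrt (1 - s^2))⁻¹ = Real.arcsin t := by
    rw [intervalIntegral.integral_eq_sub_of_hasDerivAt hderiv hcont.intervalIntegrable]
    simp
  have hmeas : MeasurableSet (Set.Ioc (0:ℝ) t) := measurableSet_Ioc
  have hF : ∀ k : ℕ, IntegrableOn (fun s => cb k * s ^ (2*k)) (Set.Ioc 0 t) volume :=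
    fun k => (by continuity : Continuous fun s : ℝ => cb k * s ^ (2*k)).integrableOn_Ioc
  have hFnorm : Summable fun k => ∫ s in Set.Ioc (0:ℝ) t, ‖cb k * s ^ (2*k)‖ := by
    apply Summable.of_nonneg_of_le (fun k => integral_nonneg (fun s => norm_nonneg _))
      (fun k => ?_) ((summable_geometric_of_lt_one (sq_nonneg t) (by nlinarith)).mul_left t)
    have hbound : ∀ s ∈ Set.Ioc (0:ℝ) t, ‖‖cb k * s ^ (2*k)‖‖ ≤ (t^2)^k := by
      intro s hs
      rw [norm_norm, Real.norm_eq_abs, abs_of_nonneg (cbpow_nonneg s k), sq_pow]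
      have h1 : s^2 ≤ t^2 := by nlinarith [hs.1.le, hs.2]
      have h2 : (s^2)^k ≤ (t^2)^k := pow_le_pow_left₀ (sq_nonneg s) h1 k
      nlinarith [cb_pos k, cb_le_one k, pow_nonneg (sq_nonneg s) k, pow_nonneg (sq_nonneg t) k]
    have hb := norm_setIntegral_le_of_norm_le_const (μ := volume) (s := Set.Ioc (0:ℝ) t)
      (C := (t^2)^k) (by rw [Real.volume_Ioc]; exact ENNReal.ofReal_lt_top)
      hbound
    calc ∫ s in Set.Ioc (0:ℝ) t, ‖cb k * s ^ (2*k)‖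
        ≤ ‖∫ s in Set.Ioc (0:ℝ) t, ‖cb k * s ^ (2*k)‖‖ := by
          rw [Real.norm_eq_abs]; exact le_abs_self _
      _ ≤ (t^2)^k * (volume (Set.Ioc (0:ℝ) t)).toReal := hb
      _ = t * (t^2)^k := by
          rw [Real.volume_Ioc, ENNReal.toReal_ofReal (by linarith)]; ring
  have hinter := integral_tsum_of_summable_integral_norm hF hFnorm
  have hcongr : (∫ s in Set.Ioc (0:ℝ) t, (∑' k, cb k * s ^ (2*k)))
      = ∫ s in Set.Ioc (0:ℝ) t, (Real.sqrt (1 - s^2))⁻¹ := by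
    apply setIntegral_congr_fun hmeas
    intro s hs
    exact (hasSum_B s (habs s (Set.Ioc_subset_Icc_self hs))).tsum_eq
  have heach : ∀ k : ℕ, (∫ s in Set.Ioc (0:ℝ) t, cb k * s ^ (2*k))
      = cb k / (2*(k:ℝ)+1) * t ^ (2*k+1) := by
    intro k
    rw [← intervalIntegral.integral_of_le ht0,
      intervalIntegral.integral_const_mul, integral_pow]
    have hc : ((2*k : ℕ) + 1 : ℝ) = 2*(k:ℝ)+1 := by push_cast; ring
    rw [zero_pow (by omega), hc]
    ring
  have hsummable : Summable (fun k => cb k / (2*(k:ℝ)+1) * t ^ (2*k+1)) := by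
    apply Summable.of_nonneg_of_le (fun k => ?_) (fun k => ?_) hFnorm
    · have h1 := cb_pos k
      have h2 : (0:ℝ) ≤ t ^ (2*k+1) := pow_nonneg ht0 _
      positivity
    · rw [← heach k]
      have hni := MeasureTheory.norm_integral_le_integral_norm
        (μ := volume.restrict (Set.Ioc (0:ℝ) t)) (fun s : ℝ => cb k * s ^ (2*k))
      refine le_trans ?_ hni
      rw [Real.norm_eq_abs]; exact le_abs_self _
  have hval : (∑' k, cb k / (2*(k:ℝ)+1) * t ^ (2*k+1)) = Real.arcsin t := by
    calc (∑' k, cb k / (2*(k:ℝ)+1) * t ^ (2*k+1))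
        = ∑' k, (∫ s in Set.Ioc (0:ℝ) t, cb k * s ^ (2*k)) := by
          congr 1; exact funext fun k => (heach k).symm
      _ = ∫ s in Set.Ioc (0:ℝ) t, (∑' k, cb k * s ^ (2*k)) := hinter
      _ = ∫ s in Set.Ioc (0:ℝ) t, (Real.sqrt (1 - s^2))⁻¹ := hcongr
      _ = ∫ s in (0:ℝ)..t, (Real.sqrt (1 - s^2))⁻¹ := (intervalIntegral.integral_of_le ht0).symm
      _ = Real.arcsin t := hint
  exact hsummable.hasSum_iff.mpr hval

lemma hasSum_sqrtpart (t : ℝ) (ht0 : 0 ≤ t) (ht1 : t < 1) :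
    HasSum (fun k => cb k / (2*(k:ℝ)+2) * t ^ (2*k+2)) (1 - Real.sqrt (1 - t^2)) := by
  have habs : ∀ s ∈ Set.Icc (0:ℝ) t, |s| < 1 := fun s hs => by
    rw [abs_of_nonneg hs.1]; exact lt_of_le_of_lt hs.2 ht1
  have hderiv : ∀ s ∈ Set.uIcc (0:ℝ) t,
      HasDerivAt (fun u => 1 - Real.sqrt (1 - u^2)) (s * (Real.sqrt (1 - s^2))⁻¹) s := by
    intro s hs
    rw [Set.uIcc_of_le ht0] at hs
    have h := habs s hs
    have h1s : (0:ℝ) < 1 - s^2 := by nlinarith [sq_abs s, abs_nonneg s]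
    have hinner : HasDerivAt (fun u : ℝ => 1 - u^2) (-(2*s)) s := by
      simpa using (hasDerivAt_pow 2 s).const_sub 1
    have hsq := (Real.hasDerivAt_sqrt h1s.ne').comp s hinner
    have := hsq.const_sub 1
    refine this.congr_deriv ?_
    have hsqrt_pos : 0 < Real.sqrt (1 - s^2) := Real.sqrt_pos.mpr h1s
    field_simp
  have hcontB : ContinuousOn (fun s => s * (Real.sqrt (1 - s^2))⁻¹) (Set.uIcc (0:ℝ) t) := by
    apply ContinuousOn.mul continuousOn_id
    apply ContinuousOn.inv₀
    · exact (Real.continuous_sqrt.comp (by continuity)).continuousOn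
    · intro s hs
      rw [Set.uIcc_of_le ht0] at hs
      have h := habs s hs
      have h1s : (0:ℝ) < 1 - s^2 := by nlinarith [sq_abs s, abs_nonneg s]
      exact (Real.sqrt_pos.mpr h1s).ne'
  have hint : ∫ s in (0:ℝ)..t, s * (Real.sqrt (1 - s^2))⁻¹ = 1 - Real.sqrt (1 - t^2) := by
    rw [intervalIntegral.integral_eq_sub_of_hasDerivAt hderiv hcontB.intervalIntegrable]
    norm_num
  have hmeas : MeasurableSet (Set.Ioc (0:ℝ) t) := measurableSet_Ioc
  have hF : ∀ k : ℕ, IntegrableOn (fun s => cb k * s ^ (2*k+1)) (Set.Ioc 0 t) volume :=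
    fun k => (by continuity : Continuous fun s : ℝ => cb k * s ^ (2*k+1)).integrableOn_Ioc
  have hFnorm : Summable fun k => ∫ s in Set.Ioc (0:ℝ) t, ‖cb k * s ^ (2*k+1)‖ := by
    apply Summable.of_nonneg_of_le (fun k => integral_nonneg (fun s => norm_nonneg _))
      (fun k => ?_) ((summable_geometric_of_lt_one (sq_nonneg t) (by nlinarith)).mul_left t)
    have hbound : ∀ s ∈ Set.Ioc (0:ℝ) t, ‖‖cb k * s ^ (2*k+1)‖‖ ≤ (t^2)^k := by
      intro s hs
      rw [norm_norm, Real.norm_eq_abs, abs_mul, abs_of_pos (cb_pos k), abs_pow,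
        abs_of_nonneg hs.1.le]
      have hs1 : s ≤ 1 := le_trans hs.2 ht1.le
      have h1 : s ^ (2*k+1) ≤ s ^ (2*k) := by
        apply pow_le_pow_of_le_one hs.1.le hs1; omega
      have h2 : s^(2*k) ≤ (t^2)^k := by
        rw [sq_pow]
        exact pow_le_pow_left₀ (sq_nonneg s) (by nlinarith [hs.1.le, hs.2]) k
      have h3 : (0:ℝ) ≤ s ^ (2*k+1) := pow_nonneg hs.1.le _
      nlinarith [cb_pos k, cb_le_one k]
    have hb := norm_setIntegral_le_of_norm_le_const (μ := volume) (s := Set.Ioc (0:ℝ) t)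
      (C := (t^2)^k) (by rw [Real.volume_Ioc]; exact ENNReal.ofReal_lt_top)
      hbound
    calc ∫ s in Set.Ioc (0:ℝ) t, ‖cb k * s ^ (2*k+1)‖
        ≤ ‖∫ s in Set.Ioc (0:ℝ) t, ‖cb k * s ^ (2*k+1)‖‖ := by
          rw [Real.norm_eq_abs]; exact le_abs_self _
      _ ≤ (t^2)^k * (volume (Set.Ioc (0:ℝ) t)).toReal := hb
      _ = t * (t^2)^k := by
          rw [Real.volume_Ioc, ENNReal.toReal_ofReal (by linarith)]; ring
  have hinter := integral_tsum_of_summable_integral_norm hF hFnorm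
  have hcongr : (∫ s in Set.Ioc (0:ℝ) t, (∑' k, cb k * s ^ (2*k+1)))
      = ∫ s in Set.Ioc (0:ℝ) t, s * (Real.sqrt (1 - s^2))⁻¹ := by
    apply setIntegral_congr_fun hmeas
    intro s hs
    have hB := (hasSum_B s (habs s (Set.Ioc_subset_Icc_self hs))).mul_left s
    have : (fun k => s * (cb k * s ^ (2*k))) = fun k => cb k * s ^ (2*k+1) := by
      funext k; rw [pow_succ]; ring
    rw [this] at hB
    exact hB.tsum_eq
  have heach : ∀ k : ℕ, (∫ s in Set.Ioc (0:ℝ) t, cb k * s ^ (2*k+1))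
      = cb k / (2*(k:ℝ)+2) * t ^ (2*k+2) := by
    intro k
    rw [← intervalIntegral.integral_of_le ht0,
      intervalIntegral.integral_const_mul, integral_pow]
    have hc : ((2*k+1 : ℕ) + 1 : ℝ) = 2*(k:ℝ)+2 := by push_cast; ring
    rw [zero_pow (by omega), hc]
    have : 2*k+1+1 = 2*k+2 := by omega
    rw [this]
    ring
  have hsummable : Summable (fun k => cb k / (2*(k:ℝ)+2) * t ^ (2*k+2)) := by
    apply Summable.of_nonneg_of_le (fun k => ?_) (fun k => ?_) hFnorm
    · have h1 := cb_pos k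
      have h2 : (0:ℝ) ≤ t ^ (2*k+2) := pow_nonneg ht0 _
      positivity
    · rw [← heach k]
      have hni := MeasureTheory.norm_integral_le_integral_norm
        (μ := volume.restrict (Set.Ioc (0:ℝ) t)) (fun s : ℝ => cb k * s ^ (2*k+1))
      refine le_trans ?_ hni
      rw [Real.norm_eq_abs]; exact le_abs_self _
  have hval : (∑' k, cb k / (2*(k:ℝ)+2) * t ^ (2*k+2)) = 1 - Real.sqrt (1 - t^2) := by
    calc (∑' k, cb k / (2*(k:ℝ)+2) * t ^ (2*k+2))
        = ∑' k, (∫ s in Set.Ioc (0:ℝ) t, cb k * s ^ (2*k+1)) := by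
          congr 1; exact funext fun k => (heach k).symm
      _ = ∫ s in Set.Ioc (0:ℝ) t, (∑' k, cb k * s ^ (2*k+1)) := hinter
      _ = ∫ s in Set.Ioc (0:ℝ) t, s * (Real.sqrt (1 - s^2))⁻¹ := hcongr
      _ = ∫ s in (0:ℝ)..t, s * (Real.sqrt (1 - s^2))⁻¹ :=
          (intervalIntegral.integral_of_le ht0).symm
      _ = 1 - Real.sqrt (1 - t^2) := hint
  exact hsummable.hasSum_iff.mpr hval

/-- the even function `g`. -/
noncomputable def gFun (t : ℝ) : ℝ := 2 * t * Real.arcsin t + Real.sqrt (1 - t^2)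

lemma gFun_continuous : Continuous gFun := by
  unfold gFun
  have : Continuous fun t : ℝ => 1 - t^2 := by continuity
  exact ((continuous_const.mul continuous_id).mul Real.continuous_arcsin).add
    (Real.continuous_sqrt.comp this)

noncomputable def dcoef (k : ℕ) : ℝ := 2 * cb k / (2*(k:ℝ)+1) - cb k / (2*(k:ℝ)+2)

lemma dcoef_pos (k : ℕ) : 0 < dcoef k := by
  unfold dcoef
  have h1 := cb_pos k
  have h2 : (0:ℝ) < 2*(k:ℝ)+1 := by positivity
  have h3 : (0:ℝ) < 2*(k:ℝ)+2 := by positivity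
  rw [sub_pos, div_lt_div_iff₀ h3 h2]
  nlinarith

lemma hasSum_g_nonneg (t : ℝ) (ht0 : 0 ≤ t) (ht1 : t < 1) :
    HasSum (fun k => dcoef k * t ^ (2*k+2)) (gFun t - 1) := by
  have h1 := (hasSum_arcsin t ht0 ht1).mul_left (2*t)
  have h2 := hasSum_sqrtpart t ht0 ht1
  have h3 := h1.sub h2
  have he : (fun k => 2*t * (cb k / (2*(k:ℝ)+1) * t ^ (2*k+1))
      - cb k / (2*(k:ℝ)+2) * t ^ (2*k+2)) = fun k => dcoef k * t ^ (2*k+2) := by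
    funext k
    have : t * t ^ (2*k+1) = t ^ (2*k+2) := by rw [← pow_succ']
    unfold dcoef
    calc 2*t * (cb k / (2*(k:ℝ)+1) * t ^ (2*k+1)) - cb k / (2*(k:ℝ)+2) * t ^ (2*k+2)
        = 2 * cb k / (2*(k:ℝ)+1) * (t * t ^ (2*k+1)) - cb k / (2*(k:ℝ)+2) * t^(2*k+2) := by
          ring
      _ = (2 * cb k / (2*(k:ℝ)+1) - cb k / (2*(k:ℝ)+2)) * t ^ (2*k+2) := by rw [this]; ring
  rw [he] at h3
  have hg : 2*t * Real.arcsin t - (1 - Real.sqrt (1 - t^2)) = gFun t - 1 := by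
    unfold gFun; ring
  rwa [hg] at h3

lemma gFun_even (t : ℝ) : gFun (-t) = gFun t := by
  unfold gFun
  rw [Real.arcsin_neg, neg_sq]
  ring

lemma hasSum_g (t : ℝ) (ht : |t| < 1) :
    HasSum (fun k => dcoef k * t ^ (2*k+2)) (gFun t - 1) := by
  rcases le_or_gt 0 t with ht0 | ht0
  · exact hasSum_g_nonneg t ht0 (lt_of_abs_lt ht)
  · have ht0' : 0 ≤ -t := by linarith
    have ht1' : -t < 1 := by
      have := neg_lt_of_abs_lt ht; linarith
    have h := hasSum_g_nonneg (-t) ht0' ht1'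
    rw [gFun_even] at h
    have he : (fun k => dcoef k * (-t) ^ (2*k+2)) = fun k => dcoef k * t ^ (2*k+2) := by
      funext k
      rw [(by omega : 2*k+2 = 2*(k+1)), sq_pow, sq_pow, neg_sq]
    rwa [he] at h


lemma inner_formula {n D : ℕ} (u : Fin n → EuclideanSpace ℝ (Fin D)) (i j : Fin n) :
    ⟪u i, u j⟫ = ∑ z, u i z * u j z := by
  simp [PiLp.inner_apply, RCLike.inner_apply, _root_.map_mul, mul_comm]

/-- Positive semidefiniteness of entrywise powers of a Gram matrix. -/
lemma psd_pow {n D : ℕ} (v : Fin n → ℝ) (u : Fin n → EuclideanSpace ℝ (Fin D)) (m : ℕ) :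
    0 ≤ ∑ i, ∑ j, v i * v j * (⟪u i, u j⟫) ^ m := by
  have key : ∀ i j : Fin n, (⟪u i, u j⟫) ^ m
      = ∑ f : Fin m → Fin D, (∏ l, u i (f l)) * (∏ l, u j (f l)) := by
    intro i j
    rw [inner_formula]
    have h1 : (∑ z, u i z * u j z) ^ m = ∏ _l : Fin m, (∑ z, u i z * u j z) := by
      rw [Finset.prod_const, Finset.card_univ, Fintype.card_fin]
    rw [h1, Finset.prod_univ_sum]
    apply Finset.sum_congr
    · ext f
      simp [Fintype.mem_piFinset]
    · intro f _
      rw [← Finset.prod_mul_distrib]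
  calc (0:ℝ) ≤ ∑ f : Fin m → Fin D, (∑ i, v i * ∏ l, u i (f l))^2 :=
        Finset.sum_nonneg fun f _ => sq_nonneg _
    _ = ∑ i, ∑ j, v i * v j * (⟪u i, u j⟫) ^ m := by
        have h2 : ∀ f : Fin m → Fin D, (∑ i, v i * ∏ l, u i (f l))^2
            = ∑ i, ∑ j, (v i * ∏ l, u i (f l)) * (v j * ∏ l, u j (f l)) := by
          intro f
          rw [sq, Finset.sum_mul_sum]
        simp_rw [h2, key]
        rw [Finset.sum_comm]
        apply Finset.sum_congr rfl
        intro i _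
        rw [Finset.sum_comm]
        apply Finset.sum_congr rfl
        intro j _
        rw [Finset.mul_sum]
        apply Finset.sum_congr rfl
        intro f _
        ring
  

lemma W_pos {n : ℕ} (v : Fin n → ℝ) (hv : v ≠ 0) (tm : Fin n → Fin n → ℝ)
    (hdiag : ∀ i, tm i i = 1) (habs : ∀ i j, |tm i j| ≤ 1)
    (hoff : ∀ i j, i ≠ j → |tm i j| < 1)
    (hpsd : ∀ m : ℕ, 0 ≤ ∑ i, ∑ j, v i * v j * tm i j ^ m) :
    0 < ∑ i, ∑ j, v i * v j * gFun (tm i j) := by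
  obtain ⟨i₀, hi₀⟩ := Function.ne_iff.mp hv
  have hVpos : 0 < ∑ i, v i ^ 2 := by
    apply Finset.sum_pos' (fun i _ => sq_nonneg _)
    exact ⟨i₀, Finset.mem_univ _, lt_of_le_of_ne (sq_nonneg _) (Ne.symm (pow_ne_zero 2 hi₀))⟩
  set S : ℕ → ℝ := fun k => ∑ i, ∑ j, v i * v j * tm i j ^ (2*k+2) with hS
  have hS0 : ∀ k, 0 ≤ S k := fun k => hpsd (2*k+2)
  have hexp : Tendsto (fun k : ℕ => 2*k+2) atTop atTop :=
    Filter.tendsto_atTop_mono (fun k => by simp only [id_eq]; omega) Filter.tendsto_id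
  have hStend : Tendsto S atTop (𝓝 (∑ i, v i ^ 2)) := by
    have hterm : ∀ i j : Fin n, Tendsto (fun k : ℕ => v i * v j * tm i j ^ (2*k+2)) atTop
        (𝓝 (if i = j then v i ^ 2 else 0)) := by
      intro i j
      by_cases hij : i = j
      · subst hij
        simp only [eq_self_iff_true, if_true, pow_two]
        exact tendsto_const_nhds.congr
          (fun k => by rw [hdiag i, one_pow, mul_one])
      · simp only [hij, if_false]
        have h0 : Tendsto (fun m : ℕ => tm i j ^ m) atTop (𝓝 0) :=
          tendsto_pow_atTop_nhds_zero_iff.mpr (hoff i j hij)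
        have h1 : Tendsto (fun k : ℕ => tm i j ^ (2*k+2)) atTop (𝓝 0) := h0.comp hexp
        simpa using h1.const_mul (v i * v j)
    have := tendsto_finset_sum (univ : Finset (Fin n)) (fun i _ =>
      tendsto_finset_sum (univ : Finset (Fin n)) (fun j _ => hterm i j))
    simpa [Finset.sum_ite_eq'] using this
  obtain ⟨K, hK⟩ := (hStend.eventually (eventually_gt_nhds (half_lt_self hVpos))).exists
  set r : ℕ → ℝ := fun m => 1 - (1:ℝ)/(m+1) with hr
  have hr0 : ∀ m, 0 ≤ r m := by
    intro m
    have h1 : (1:ℝ)/(m+1) ≤ 1 := by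
      rw [div_le_one (by positivity)]; norm_num
    simp only [hr]; linarith
  have hr1 : ∀ m, r m < 1 := by
    intro m
    have h1 : (0:ℝ) < 1/(m+1) := by positivity
    simp only [hr]; linarith
  have hrt : Tendsto r atTop (𝓝 1) := by
    have h0 : Tendsto (fun m : ℕ => (1:ℝ)/(m+1)) atTop (𝓝 0) :=
      tendsto_one_div_add_atTop_nhds_zero_nat
    have h1 : Tendsto (fun _ : ℕ => (1:ℝ)) atTop (𝓝 1) := tendsto_const_nhds
    simpa [hr] using h1.sub h0
  have hbound : ∀ m, dcoef K * r m ^ (2*K+2) * S K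
      ≤ ∑ i, ∑ j, v i * v j * gFun (r m * tm i j) := by
    intro m
    have habs' : ∀ i j : Fin n, |r m * tm i j| < 1 := by
      intro i j
      rw [abs_mul, abs_of_nonneg (hr0 m)]
      calc r m * |tm i j| ≤ r m * 1 := by
            have := habs i j; nlinarith [hr0 m]
        _ < 1 := by rw [mul_one]; exact hr1 m
    have hhs : HasSum (fun k => ∑ i, ∑ j, v i * v j * (dcoef k * (r m * tm i j) ^ (2*k+2)))
        (∑ i, ∑ j, v i * v j * (gFun (r m * tm i j) - 1)) := by
      apply hasSum_sum
      intro i _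
      apply hasSum_sum
      intro j _
      exact (hasSum_g (r m * tm i j) (habs' i j)).mul_left (v i * v j)
    have hfun : (fun k => ∑ i, ∑ j, v i * v j * (dcoef k * (r m * tm i j) ^ (2*k+2)))
        = fun k => dcoef k * r m ^ (2*k+2) * S k := by
      funext k
      rw [hS]
      rw [Finset.mul_sum]
      apply Finset.sum_congr rfl
      intro i _
      rw [Finset.mul_sum]
      apply Finset.sum_congr rfl
      intro j _
      rw [mul_pow]
      ring
    rw [hfun] at hhs
    have hle : dcoef K * r m ^ (2*K+2) * S K
        ≤ ∑ i, ∑ j, v i * v j * (gFun (r m * tm i j) - 1) := by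
      apply le_hasSum hhs K
      intro k _
      have h1 := (dcoef_pos k).le
      have h2 : (0:ℝ) ≤ r m ^ (2*k+2) := pow_nonneg (hr0 m) _
      have h3 := hS0 k
      positivity
    have hsplit : ∑ i, ∑ j, v i * v j * (gFun (r m * tm i j) - 1)
        = (∑ i, ∑ j, v i * v j * gFun (r m * tm i j)) - (∑ i, v i)^2 := by
      rw [sq, Finset.sum_mul_sum]
      rw [← Finset.sum_sub_distrib]
      apply Finset.sum_congr rfl
      intro i _
      rw [← Finset.sum_sub_distrib]
      apply Finset.sum_congr rfl
      intro j _
      ring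
    rw [hsplit] at hle
    nlinarith [sq_nonneg (∑ i, v i)]
  have hφlim : Tendsto (fun m => ∑ i, ∑ j, v i * v j * gFun (r m * tm i j)) atTop
      (𝓝 (∑ i, ∑ j, v i * v j * gFun (tm i j))) := by
    apply tendsto_finset_sum
    intro i _
    apply tendsto_finset_sum
    intro j _
    have h1 : Tendsto (fun m => r m * tm i j) atTop (𝓝 (tm i j)) := by
      have := hrt.mul_const (tm i j)
      rwa [one_mul] at this
    exact ((gFun_continuous.tendsto (tm i j)).comp h1).const_mul (v i * v j)
  have hrhslim : Tendsto (fun m => dcoef K * r m ^ (2*K+2) * S K) atTop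
      (𝓝 (dcoef K * S K)) := by
    have h1 : Tendsto (fun m => r m ^ (2*K+2)) atTop (𝓝 1) := by
      have := hrt.pow (2*K+2)
      rwa [one_pow] at this
    have h2 := (h1.const_mul (dcoef K)).mul_const (S K)
    simpa using h2
  have hfinal : dcoef K * S K ≤ ∑ i, ∑ j, v i * v j * gFun (tm i j) :=
    le_of_tendsto_of_tendsto' hrhslim hφlim hbound
  have hSKpos : 0 < S K := lt_of_le_of_lt (by positivity) hK
  nlinarith [dcoef_pos K]


lemma inner_formula' {D : ℕ} (a b : EuclideanSpace ℝ (Fin D)) :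
    ⟪a, b⟫ = ∑ z, a z * b z := by
  simp [PiLp.inner_apply, RCLike.inner_apply, _root_.map_mul, mul_comm]

/-- lift `x ∈ ℝ^d` to `(x,1) ∈ ℝ^{d+1}`. -/
noncomputable def lift (d : ℕ) (x : EuclideanSpace ℝ (Fin d)) : EuclideanSpace ℝ (Fin (d+1)) :=
  WithLp.toLp 2 (Fin.snoc (x : Fin d → ℝ) (1 : ℝ))

lemma lift_castSucc (d : ℕ) (x : EuclideanSpace ℝ (Fin d)) (m : Fin d) :
    lift d x m.castSucc = x m := by
  simp [lift, Fin.snoc_castSucc]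

lemma lift_last (d : ℕ) (x : EuclideanSpace ℝ (Fin d)) :
    lift d x (Fin.last d) = 1 := by
  simp [lift]

lemma inner_lift (d : ℕ) (x y : EuclideanSpace ℝ (Fin d)) :
    ⟪lift d x, lift d y⟫ = ⟪x, y⟫ + 1 := by
  rw [inner_formula', inner_formula', Fin.sum_univ_castSucc]
  simp [lift_castSucc, lift_last]

lemma norm_lift_sq (d : ℕ) (x : EuclideanSpace ℝ (Fin d)) :
    ‖lift d x‖ ^ 2 = ‖x‖ ^ 2 + 1 := by
  rw [← real_inner_self_eq_norm_sq, ← real_inner_self_eq_norm_sq]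
  exact inner_lift d x x

lemma norm_lift (d : ℕ) (x : EuclideanSpace ℝ (Fin d)) :
    ‖lift d x‖ = Real.sqrt (‖x‖ ^ 2 + 1) := by
  rw [← norm_lift_sq, Real.sqrt_sq (norm_nonneg _)]

lemma lift_inj (d : ℕ) {x y : EuclideanSpace ℝ (Fin d)} (h : lift d x = lift d y) : x = y := by
  ext m
  have := congrFun (congrArg (fun (v : EuclideanSpace ℝ (Fin (d+1))) (z : Fin (d+1)) => v z) h)
    m.castSucc
  simpa [lift_castSucc] using this


lemma lift_norm_pos (d : ℕ) (x : EuclideanSpace ℝ (Fin d)) : 0 < ‖lift d x‖ := by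
  have h := norm_lift_sq d x
  nlinarith [norm_nonneg (lift d x), sq_nonneg ‖x‖]

lemma ntkK_eq (d : ℕ) (x y : EuclideanSpace ℝ (Fin d)) :
    ntkK d x y = 1 + ⟪lift d x, lift d y⟫
      + (1/π) * (‖lift d x‖ * ‖lift d y‖)
        * gFun (⟪lift d x, lift d y⟫ / (‖lift d x‖ * ‖lift d y‖)) := by
  set a := ‖lift d x‖ with ha
  set b := ‖lift d y‖ with hb
  set p := ⟪lift d x, lift d y⟫ with hp
  have hap : 0 < a := lift_norm_pos d x
  have hbp : 0 < b := lift_norm_pos d y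
  have hpin : p = ⟪x, y⟫ + 1 := inner_lift d x y
  have hasq : a ^ 2 = ‖x‖ ^ 2 + 1 := norm_lift_sq d x
  have hbsq : b ^ 2 = ‖y‖ ^ 2 + 1 := norm_lift_sq d y
  have hsab : Real.sqrt ((‖x‖ ^ 2 + 1) * (‖y‖ ^ 2 + 1)) = a * b := by
    rw [← hasq, ← hbsq, show a^2 * b^2 = (a*b)^2 by ring, Real.sqrt_sq (by positivity)]
  set t := p / (a * b) with htdef
  have habne : a * b ≠ 0 := by positivity
  have hpt : p = a * b * t := by rw [htdef]; field_simp
  have habs : |p| ≤ a * b := by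
    rw [ha, hb, hp]; exact abs_real_inner_le_norm _ _
  have ht2 : t ^ 2 ≤ 1 := by
    rw [htdef, div_pow, div_le_one (by positivity)]
    calc p^2 = |p|^2 := (sq_abs p).symm
      _ ≤ (a*b)^2 := by nlinarith [abs_nonneg p]
  have hpsi : ntkPsi d x y = Real.arccos t := by
    rw [ntkPsi, hsab, ← hpin, htdef]
  have hE : ‖x - y‖ ^ 2 + ‖x‖ ^ 2 * ‖y‖ ^ 2 - ⟪x, y⟫ ^ 2 = (a*b)^2 * (1 - t^2) := by
    have h1 : (a*b)^2 * (1 - t^2) = (a*b)^2 - p^2 := by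
      rw [htdef]; field_simp
    rw [h1, norm_sub_sq_real]
    have h2 : (a*b)^2 = (‖x‖^2+1) * (‖y‖^2+1) := by rw [mul_pow, hasq, hbsq]
    rw [h2, hpin]; ring
  have hsqrtE : Real.sqrt (‖x - y‖ ^ 2 + ‖x‖ ^ 2 * ‖y‖ ^ 2 - ⟪x, y⟫ ^ 2)
      = a * b * Real.sqrt (1 - t^2) := by
    rw [hE, Real.sqrt_mul (sq_nonneg _), Real.sqrt_sq (by positivity)]
  rw [ntkK, hpsi, hsqrtE, ← hpin, Real.arccos_eq_pi_div_two_sub_arcsin]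
  simp only [gFun]
  rw [hpt]
  have hπ : π ≠ 0 := Real.pi_ne_zero
  field_simp
  ring

theorem main_thm (d : ℕ) (n : ℕ)
    (x : Fin n → EuclideanSpace ℝ (Fin d)) (hx : Function.Injective x) :
    (Matrix.of fun i j => ntkK d (x i) (x j)).PosDef := by
  classical
  set l : Fin n → EuclideanSpace ℝ (Fin (d+1)) := fun i => lift d (x i) with hl
  set a : Fin n → ℝ := fun i => ‖l i‖ with haf
  have hap : ∀ i, 0 < a i := fun i => lift_norm_pos d (x i)
  set u : Fin n → EuclideanSpace ℝ (Fin (d+1)) := fun i => (a i)⁻¹ • l i with hu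
  have hlne : ∀ i, l i ≠ 0 := fun i => by
    intro h0
    have := hap i
    rw [haf] at this
    simp only [h0, norm_zero] at this
    exact lt_irrefl _ this
  have hunorm : ∀ i, ‖u i‖ = 1 := fun i => norm_smul_inv_norm (hlne i)
  set tm : Fin n → Fin n → ℝ := fun i j => ⟪u i, u j⟫ with htm
  have htm_eq : ∀ i j, tm i j = ⟪l i, l j⟫ / (a i * a j) := by
    intro i j
    rw [htm]
    show ⟪(a i)⁻¹ • l i, (a j)⁻¹ • l j⟫ = _
    rw [real_inner_smul_left, real_inner_smul_right]
    field_simp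
  have htm_diag : ∀ i, tm i i = 1 := by
    intro i
    rw [htm]
    show ⟪u i, u i⟫ = 1
    rw [real_inner_self_eq_norm_sq, hunorm i]; norm_num
  have htm_abs : ∀ i j, |tm i j| ≤ 1 := by
    intro i j
    rw [htm]
    calc |⟪u i, u j⟫| ≤ ‖u i‖ * ‖u j‖ := abs_real_inner_le_norm _ _
      _ = 1 := by rw [hunorm i, hunorm j, mul_one]
  have hulast : ∀ i, u i (Fin.last d) = (a i)⁻¹ := by
    intro i
    show ((a i)⁻¹ • l i) (Fin.last d) = (a i)⁻¹
    rw [PiLp.smul_apply]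
    rw [hl]
    show (a i)⁻¹ • (lift d (x i) (Fin.last d)) = (a i)⁻¹
    rw [lift_last, smul_eq_mul, mul_one]
  have htm_off : ∀ i j, i ≠ j → |tm i j| < 1 := by
    intro i j hij
    rcases lt_or_eq_of_le (htm_abs i j) with h | h
    · exact h
    exfalso
    rw [abs_eq (by norm_num : (0:ℝ) ≤ 1)] at h
    rcases h with h1 | hm1
    · -- tm i j = 1 : u i = u j
      have he : ⟪u i, u j⟫ = ‖u i‖ * ‖u j‖ := by
        rw [hunorm i, hunorm j, mul_one]; exact h1
      have := inner_eq_norm_mul_iff_real.mp he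
      rw [hunorm i, hunorm j, one_smul, one_smul] at this
      -- this : u i = u j
      have hlast := congrFun (congrArg (fun (v : EuclideanSpace ℝ (Fin (d+1)))
        (z : Fin (d+1)) => v z) this) (Fin.last d)
      simp only at hlast
      rw [show u i (Fin.last d) = (a i)⁻¹ from hulast i,
        show u j (Fin.last d) = (a j)⁻¹ from hulast j] at hlast
      have haij : a i = a j := by
        have h1 := (hap i).ne'
        have h2 := (hap j).ne'
        field_simp at hlast
        exact hlast.symm
      have hli : l i = l j := by
        have h2 : (a i)⁻¹ • l i = (a i)⁻¹ • l j := by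
          rw [hu] at this
          simpa [haij] using this
        have h3 := congrArg (fun w => (a i) • w) h2
        simpa [smul_smul, mul_inv_cancel₀ (hap i).ne'] using h3
      exact hij (hx (lift_inj d hli))
    · -- tm i j = -1 : u i = - u j
      have hm1' : (⟪u i, u j⟫ : ℝ) = -1 := hm1
      have he : ⟪u i, -u j⟫ = ‖u i‖ * ‖-u j‖ := by
        rw [inner_neg_right, hunorm i, norm_neg, hunorm j, mul_one, hm1']
        norm_num
      have := inner_eq_norm_mul_iff_real.mp he
      rw [norm_neg, hunorm i, hunorm j, one_smul, one_smul] at this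
      have hlast := congrFun (congrArg (fun (v : EuclideanSpace ℝ (Fin (d+1)))
        (z : Fin (d+1)) => v z) this) (Fin.last d)
      simp only at hlast
      have hneg : (-u j) (Fin.last d) = -((a j)⁻¹) := by
        rw [PiLp.neg_apply, hulast j]
      rw [show u i (Fin.last d) = (a i)⁻¹ from hulast i, hneg] at hlast
      have h1 : (0:ℝ) < (a i)⁻¹ := inv_pos.mpr (hap i)
      have h2 : (0:ℝ) < (a j)⁻¹ := inv_pos.mpr (hap j)
      linarith [hlast]
  -- the kernel identity in terms of tm
  have hK : ∀ i j, ntkK d (x i) (x j)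
      = 1 + ⟪l i, l j⟫ + (1/π) * (a i * a j) * gFun (tm i j) := by
    intro i j
    rw [ntkK_eq d (x i) (x j), htm_eq i j]
  rw [Matrix.posDef_iff_dotProduct_mulVec]
  constructor
  · -- Hermitian
    ext i j
    simp only [Matrix.conjTranspose_apply, Matrix.of_apply, star_trivial]
    rw [hK i j, hK j i, htm_eq i j, htm_eq j i, real_inner_comm (l j) (l i),
      mul_comm (a j) (a i)]
  · intro c hc
    have hQ : dotProduct (star c) ((Matrix.of fun i j => ntkK d (x i) (x j)).mulVec c)
        = ∑ i, ∑ j, c i * c j * ntkK d (x i) (x j) := by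
      simp only [dotProduct, Matrix.mulVec, Matrix.of_apply, star_trivial, Pi.star_apply]
      apply Finset.sum_congr rfl
      intro i _
      rw [Finset.mul_sum]
      apply Finset.sum_congr rfl
      intro j _
      show c i * (ntkK d (x i) (x j) * c j) = c i * c j * ntkK d (x i) (x j)
      ring
    rw [hQ]
    set v : Fin n → ℝ := fun i => c i * a i with hv
    have hvne : v ≠ 0 := by
      intro h0
      apply hc
      funext i
      have := congrFun h0 i
      simp only [hv, Pi.zero_apply] at this
      have := mul_eq_zero.mp this
      rcases this with h | h
      · exact h
      · exact absurd h (hap i).ne'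
    have hsplit : ∑ i, ∑ j, c i * c j * ntkK d (x i) (x j)
        = (∑ i, c i)^2 + ⟪∑ i, c i • l i, ∑ j, c j • l j⟫
          + (1/π) * ∑ i, ∑ j, v i * v j * gFun (tm i j) := by
      have h1 : ∀ i j, c i * c j * ntkK d (x i) (x j)
          = c i * c j + c i * c j * ⟪l i, l j⟫
            + (1/π) * (v i * v j * gFun (tm i j)) := by
        intro i j
        rw [hK i j, hv]
        show c i * c j * (1 + ⟪l i, l j⟫ + (1/π) * (a i * a j) * gFun (tm i j))
          = _
        ring
      simp_rw [h1]
      rw [Finset.sum_congr rfl (fun i _ => Finset.sum_add_distrib),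
        Finset.sum_add_distrib]
      congr 1
      · rw [Finset.sum_congr rfl (fun i _ => Finset.sum_add_distrib),
          Finset.sum_add_distrib]
        congr 1
        · rw [sq, Finset.sum_mul_sum]
        · rw [sum_inner]
          apply Finset.sum_congr rfl
          intro i _
          rw [real_inner_smul_left, inner_sum, Finset.mul_sum]
          apply Finset.sum_congr rfl
          intro j _
          rw [real_inner_smul_right]
          ring
      · rw [Finset.mul_sum]
        apply Finset.sum_congr rfl
        intro i _
        rw [Finset.mul_sum]
    rw [hsplit]
    have hW : 0 < ∑ i, ∑ j, v i * v j * gFun (tm i j) := by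
      apply W_pos v hvne tm htm_diag htm_abs htm_off
      intro m
      have := psd_pow v u m
      exact this
    have h2 : (0:ℝ) ≤ ⟪∑ i, c i • l i, ∑ j, c j • l j⟫ := real_inner_self_nonneg
    have h1 : (0:ℝ) ≤ (∑ i, c i)^2 := sq_nonneg _
    have hπ : (0:ℝ) < 1/π := by positivity
    nlinarith


end NTKaux

/-- **Positive definiteness of the NTK on `ℝ^d`.**  For every `d ≥ 1` and every finite
collection of pairwise distinct points in `ℝ^d`, the NTK Gram matrix is positive definite. -/
theorem ntk_gram_posDef (d : ℕ) (hd : 1 ≤ d) (n : ℕ)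
    (x : Fin n → EuclideanSpace ℝ (Fin d)) (hx : Function.Injective x) :
    (Matrix.of fun i j => ntkK d (x i) (x j)).PosDef :=
  NTKaux.main_thm d n x hx
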